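/- arXiv:1910.13874 — 9 statements merged into one kernel-verified Lean document; each statement's English description precedes it below -/
import Mathlib

section
/- GED-Walk is submodular as a set function: if α·σ_max < 1, S ⊆ T ⊆ V, and x ∈ V \ T, then GED(S ∪ {x}) − GED(S) ≥ GED(T ∪ {x}) − GED(T). -/
open scoped BigOperators

/-- `p : Fin (i+1) → V` is a walk of length `i` in `G`:
a sequence of `i+1` vertices in which consecutive vertices are adjacent. -/
def SimpleGraph.IsWalkFun {V : Type*} (G : SimpleGraph V) (i : ℕ) (p : Fin (i + 1) → V) : Prop :=
  ∀ j : Fin i, G.Adj (p j.castSucc) (p j.succ)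

instance {V : Type*} (G : SimpleGraph V) [DecidableRel G.Adj] (i : ℕ) :
    DecidablePred (G.IsWalkFun i) := fun p =>
  decidable_of_iff (∀ j : Fin i, G.Adj (p j.castSucc) (p j.succ)) Iff.rfl

/-- `φ_i(S)`: the number of walks of length `i` in `G` containing at least one vertex of `S`. -/
def SimpleGraph.phiCount {V : Type*} [Fintype V] [DecidableEq V] (G : SimpleGraph V)
    [DecidableRel G.Adj] (i : ℕ) (S : Finset V) : ℕ :=
  (Finset.univ.filter fun p : Fin (i + 1) → V => G.IsWalkFun i p ∧ ∃ j, p j ∈ S).card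

/-- The total number of walks of length `i` in `G`. -/
def SimpleGraph.walkCount {V : Type*} [Fintype V] [DecidableEq V] (G : SimpleGraph V)
    [DecidableRel G.Adj] (i : ℕ) : ℕ :=
  (Finset.univ.filter fun p : Fin (i + 1) → V => G.IsWalkFun i p).card

/-- `φ^miss_i(v, S)`: the number of walks of length `i` ending at `v` containing no vertex of `S`. -/
def SimpleGraph.missCount {V : Type*} [Fintype V] [DecidableEq V] (G : SimpleGraph V)
    [DecidableRel G.Adj] (i : ℕ) (v : V) (S : Finset V) : ℕ :=
  (Finset.univ.filter fun p : Fin (i + 1) → V =>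
    G.IsWalkFun i p ∧ p (Fin.last i) = v ∧ ∀ j, p j ∉ S).card

/-- `φ^hit_i(v, S)`: the number of walks of length `i` ending at `v` containing at least one
vertex of `S`. -/
def SimpleGraph.hitCount {V : Type*} [Fintype V] [DecidableEq V] (G : SimpleGraph V)
    [DecidableRel G.Adj] (i : ℕ) (v : V) (S : Finset V) : ℕ :=
  (Finset.univ.filter fun p : Fin (i + 1) → V =>
    G.IsWalkFun i p ∧ p (Fin.last i) = v ∧ ∃ j, p j ∈ S).card

/-- `s_j(x, S)`: the number of walks of length `j` starting at `x` containing no vertex of `S`. -/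
def SimpleGraph.startMissCount {V : Type*} [Fintype V] [DecidableEq V] (G : SimpleGraph V)
    [DecidableRel G.Adj] (j : ℕ) (x : V) (S : Finset V) : ℕ :=
  (Finset.univ.filter fun p : Fin (j + 1) → V =>
    G.IsWalkFun j p ∧ p 0 = x ∧ ∀ l, p l ∉ S).card

/-- `σ_max`: the largest singular value of the adjacency matrix of `G`,
i.e. its ℓ²→ℓ² operator norm. -/
noncomputable def SimpleGraph.sigmaMax {V : Type*} [Fintype V] [DecidableEq V]
    (G : SimpleGraph V) [DecidableRel G.Adj] : ℝ :=
  ‖Matrix.toEuclideanCLM (𝕜 := ℝ) (G.adjMatrix ℝ)‖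

/-- `ω_i(x) = Σ_z (A^i)_{xz}`: the number of walks of length `i` starting at `x`. -/
noncomputable def SimpleGraph.omegaCount {V : Type*} [Fintype V] [DecidableEq V]
    (G : SimpleGraph V) [DecidableRel G.Adj] (i : ℕ) (x : V) : ℝ :=
  ∑ z : V, (G.adjMatrix ℝ ^ i) x z

/-- `GED(S) = Σ_{i=1}^∞ α^i φ_i(S)`. -/
noncomputable def SimpleGraph.GED {V : Type*} [Fintype V] [DecidableEq V] (G : SimpleGraph V)
    [DecidableRel G.Adj] (α : ℝ) (S : Finset V) : ℝ :=
  ∑' i : ℕ, α ^ (i + 1) * (G.phiCount (i + 1) S : ℝ)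

/-- `GED_{≤ℓ}(S) = Σ_{i=1}^ℓ α^i φ_i(S)`. -/
noncomputable def SimpleGraph.GEDle {V : Type*} [Fintype V] [DecidableEq V] (G : SimpleGraph V)
    [DecidableRel G.Adj] (α : ℝ) (ℓ : ℕ) (S : Finset V) : ℝ :=
  ∑ i ∈ Finset.range ℓ, α ^ (i + 1) * (G.phiCount (i + 1) S : ℝ)

/-- `GED_{>ℓ}(S) = Σ_{i=ℓ+1}^∞ α^i φ_i(S)`. -/
noncomputable def SimpleGraph.GEDtail {V : Type*} [Fintype V] [DecidableEq V] (G : SimpleGraph V)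
    [DecidableRel G.Adj] (α : ℝ) (ℓ : ℕ) (S : Finset V) : ℝ :=
  ∑' i : ℕ, α ^ (ℓ + 1 + i) * (G.phiCount (ℓ + 1 + i) S : ℝ)

/-- `KC(x) = Σ_{i=1}^∞ α^i ω_i(x)`: Katz centrality of `x`. -/
noncomputable def SimpleGraph.katz {V : Type*} [Fintype V] [DecidableEq V] (G : SimpleGraph V)
    [DecidableRel G.Adj] (α : ℝ) (x : V) : ℝ :=
  ∑' i : ℕ, α ^ (i + 1) * G.omegaCount (i + 1) x
namespace SimpleGraph

variable {V : Type*} [Fintype V] [DecidableEq V] (G : SimpleGraph V) [DecidableRel G.Adj]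

/-- Walks of length `i` hitting `x` and missing `U`. -/
def hitMissCount (i : ℕ) (x : V) (U : Finset V) : ℕ :=
  (Finset.univ.filter fun p : Fin (i + 1) → V =>
    G.IsWalkFun i p ∧ (∃ j, p j = x) ∧ ∀ j, p j ∉ U).card

lemma phiCount_insert (i : ℕ) (x : V) (U : Finset V) :
    G.phiCount i (insert x U) = G.phiCount i U + G.hitMissCount i x U := by
  classical
  rw [phiCount, hitMissCount, phiCount, ← Finset.card_union_of_disjoint (by
    rw [Finset.disjoint_left]
    rintro p hp hq
    simp only [Finset.mem_filter] at hp hq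
    obtain ⟨j, hj⟩ := hp.2.2
    exact hq.2.2.2 j hj)]
  congr 1
  ext p
  simp only [Finset.mem_union, Finset.mem_filter, Finset.mem_univ, true_and, Finset.mem_insert]
  constructor
  · rintro ⟨hw, j, hj | hj⟩
    · by_cases hU : ∃ k, p k ∈ U
      · exact Or.inl ⟨hw, hU⟩
      · push_neg at hU
        exact Or.inr ⟨hw, ⟨j, hj⟩, hU⟩
    · exact Or.inl ⟨hw, j, hj⟩
  · rintro (⟨hw, j, hj⟩ | ⟨hw, ⟨j, hj⟩, -⟩)
    · exact ⟨hw, j, Or.inr hj⟩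
    · exact ⟨hw, j, Or.inl hj⟩

lemma hitMissCount_anti (i : ℕ) (x : V) {S T : Finset V} (hST : S ⊆ T) :
    G.hitMissCount i x T ≤ G.hitMissCount i x S := by
  apply Finset.card_le_card
  intro p hp
  simp only [Finset.mem_filter, Finset.mem_univ, true_and] at hp ⊢
  exact ⟨hp.1, hp.2.1, fun j hj => hp.2.2 j (hST hj)⟩

/-- Number of walks of length `i` ending at `v`. -/
def endCount (i : ℕ) (v : V) : ℕ :=
  (Finset.univ.filter fun p : Fin (i + 1) → V =>
    G.IsWalkFun i p ∧ p (Fin.last i) = v).card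

lemma endCount_zero (v : V) : G.endCount 0 v = 1 := by
  rw [endCount, Finset.card_eq_one]
  refine ⟨fun _ => v, ?_⟩
  ext p
  simp only [Finset.mem_filter, Finset.mem_univ, true_and, Finset.mem_singleton]
  constructor
  · rintro ⟨-, hp⟩
    funext j
    have hj : j = Fin.last 0 := Fin.ext (by omega)
    rwa [hj]
  · rintro rfl
    exact ⟨fun j => j.elim0, rfl⟩

lemma isWalkFun_snoc (i : ℕ) (q : Fin (i + 1) → V) (v : V) :
    G.IsWalkFun (i + 1) (Fin.snoc q v) ↔ G.IsWalkFun i q ∧ G.Adj (q (Fin.last i)) v := by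
  constructor
  · intro h
    refine ⟨fun k => ?_, ?_⟩
    · have := h k.castSucc
      rwa [Fin.succ_castSucc, Fin.snoc_castSucc, Fin.snoc_castSucc] at this
    · have := h (Fin.last i)
      rwa [Fin.succ_last, Fin.snoc_castSucc, Fin.snoc_last] at this
  · rintro ⟨hq, hv⟩ j
    refine Fin.lastCases ?_ ?_ j
    · rwa [Fin.succ_last, Fin.snoc_castSucc, Fin.snoc_last]
    · intro k
      rw [Fin.succ_castSucc, Fin.snoc_castSucc, Fin.snoc_castSucc]
      exact hq k

lemma endCount_succ (i : ℕ) (v : V) :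
    G.endCount (i + 1) v = ∑ u : V, if G.Adj u v then G.endCount i u else 0 := by
  classical
  rw [endCount, Finset.card_eq_sum_card_fiberwise
    (f := fun p : Fin (i + 2) → V => p (Fin.last i).castSucc) (t := Finset.univ)
    (fun p _ => Finset.mem_univ _)]
  refine Finset.sum_congr rfl fun u _ => ?_
  by_cases hadj : G.Adj u v
  · rw [if_pos hadj, endCount]
    refine Finset.card_nbij' (fun p => Fin.init p) (fun q => Fin.snoc q v) ?_ ?_ ?_ ?_
    · intro p hp
      simp only [Finset.mem_coe, Finset.mem_filter, Finset.mem_univ, true_and] at hp ⊢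
      obtain ⟨⟨hw, hlast⟩, hu⟩ := hp
      have hp' : G.IsWalkFun (i + 1) (Fin.snoc (Fin.init p) (p (Fin.last (i + 1)))) := by
        rwa [Fin.snoc_init_self]
      rw [G.isWalkFun_snoc] at hp'
      exact ⟨hp'.1, hu⟩
    · intro q hq
      simp only [Finset.mem_coe, Finset.mem_filter, Finset.mem_univ, true_and] at hq ⊢
      obtain ⟨hw, hlast⟩ := hq
      refine ⟨⟨?_, ?_⟩, ?_⟩
      · rw [G.isWalkFun_snoc]
        exact ⟨hw, hlast ▸ hadj⟩
      · exact Fin.snoc_last _ _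
      · rw [Fin.snoc_castSucc]
        exact hlast
    · intro p hp
      simp only [Finset.mem_coe, Finset.mem_filter, Finset.mem_univ, true_and] at hp
      obtain ⟨⟨hw, hlast⟩, hu⟩ := hp
      show Fin.snoc (Fin.init p) v = p
      rw [← hlast]
      exact Fin.snoc_init_self p
    · intro q hq
      exact Fin.init_snoc _ _
  · rw [if_neg hadj, Finset.card_eq_zero, Finset.eq_empty_iff_forall_notMem]
    intro p hp
    simp only [Finset.mem_filter, Finset.mem_univ, true_and] at hp
    obtain ⟨⟨hw, hlast⟩, hu⟩ := hp
    have := hw (Fin.last i)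
    rw [Fin.succ_last] at this
    rw [hu, hlast] at this
    exact hadj this

lemma endCount_eq_sum (i : ℕ) (v : V) :
    (G.endCount i v : ℝ) = ∑ u : V, (G.adjMatrix ℝ ^ i) u v := by
  induction i generalizing v with
  | zero =>
    rw [endCount_zero, pow_zero]
    simp [Matrix.one_apply]
  | succ i ih =>
    rw [endCount_succ, pow_succ]
    push_cast
    have hs : ∑ u : V, (G.adjMatrix ℝ ^ i * G.adjMatrix ℝ) u v
        = ∑ w : V, (∑ u : V, (G.adjMatrix ℝ ^ i) u w) * G.adjMatrix ℝ w v := by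
      simp_rw [Matrix.mul_apply, Finset.sum_mul]
      exact Finset.sum_comm
    rw [hs]
    refine Finset.sum_congr rfl fun w _ => ?_
    rw [← ih w, adjMatrix_apply, mul_ite, mul_one, mul_zero]

lemma walkCount_eq_sum (i : ℕ) :
    (G.walkCount i : ℝ) = ∑ v : V, (G.endCount i v : ℝ) := by
  rw [walkCount, Finset.card_eq_sum_card_fiberwise
    (f := fun p : Fin (i + 1) → V => p (Fin.last i)) (t := Finset.univ)
    (fun p _ => Finset.mem_univ _)]
  push_cast
  refine Finset.sum_congr rfl fun v _ => ?_
  norm_cast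
  rw [endCount, Finset.filter_filter]

lemma walkCount_le (i : ℕ) :
    (G.walkCount (i + 1) : ℝ) ≤ (Fintype.card V : ℝ) * G.sigmaMax ^ (i + 1) := by
  classical
  set e : EuclideanSpace ℝ V := (WithLp.equiv 2 (V → ℝ)).symm (fun _ => 1) with he
  have heu : ∀ u, e u = 1 := fun u => rfl
  set w : EuclideanSpace ℝ V := Matrix.toEuclideanCLM (𝕜 := ℝ) (G.adjMatrix ℝ ^ (i + 1)) e
    with hw
  have hnorm2 : ‖e‖ * ‖e‖ = (Fintype.card V : ℝ) := by
    rw [← real_inner_self_eq_norm_mul_norm, PiLp.inner_apply]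
    simp [heu]
  have h1 : inner (𝕜 := ℝ) e w = ∑ u : V, ∑ v : V, (G.adjMatrix ℝ ^ (i + 1)) u v := by
    rw [PiLp.inner_apply]
    refine Finset.sum_congr rfl fun u _ => ?_
    have hwu : w u = ∑ v : V, (G.adjMatrix ℝ ^ (i + 1)) u v := by
      have hwv : w = (WithLp.equiv 2 (V → ℝ)).symm
          ((G.adjMatrix ℝ ^ (i + 1)).mulVec (fun _ => 1)) := by
        rw [hw, he, WithLp.equiv_symm_apply, Matrix.toEuclideanCLM_toLp]
      rw [hwv]
      show (G.adjMatrix ℝ ^ (i + 1)).mulVec (fun _ => 1) u = _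
      simp [Matrix.mulVec, dotProduct]
    rw [heu u, hwu]
    simp
  have h2 : (G.walkCount (i + 1) : ℝ) = ∑ u : V, ∑ v : V, (G.adjMatrix ℝ ^ (i + 1)) u v := by
    rw [walkCount_eq_sum]
    simp_rw [endCount_eq_sum]
    exact Finset.sum_comm
  calc (G.walkCount (i + 1) : ℝ) = inner (𝕜 := ℝ) e w := by rw [h1, h2]
    _ ≤ ‖e‖ * ‖w‖ := real_inner_le_norm _ _
    _ ≤ ‖e‖ * (G.sigmaMax ^ (i + 1) * ‖e‖) := by
        apply mul_le_mul_of_nonneg_left _ (norm_nonneg _)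
        rw [hw]
        refine le_trans (ContinuousLinearMap.le_opNorm _ _) ?_
        apply mul_le_mul_of_nonneg_right _ (norm_nonneg _)
        rw [map_pow]
        exact norm_pow_le' _ (Nat.succ_pos i)
    _ = (Fintype.card V : ℝ) * G.sigmaMax ^ (i + 1) := by rw [← hnorm2]; ring

lemma phiCount_le_walkCount (i : ℕ) (U : Finset V) : G.phiCount i U ≤ G.walkCount i :=
  Finset.card_le_card (Finset.filter_subset_filter _ (fun p hp => hp) |>.trans (by
    intro p hp
    simp only [Finset.mem_filter, Finset.mem_univ, true_and] at hp ⊢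
    exact hp.1))

lemma hitMissCount_le_walkCount (i : ℕ) (x : V) (U : Finset V) :
    G.hitMissCount i x U ≤ G.walkCount i := by
  apply Finset.card_le_card
  intro p hp
  simp only [Finset.mem_filter, Finset.mem_univ, true_and] at hp ⊢
  exact hp.1

lemma summable_aux {α : ℝ} (hα : 0 < α) (h : α * G.sigmaMax < 1) (c : ℕ → ℕ)
    (hc : ∀ i, c i ≤ G.walkCount (i + 1)) :
    Summable (fun i : ℕ => α ^ (i + 1) * (c i : ℝ)) := by
  have hσ : (0 : ℝ) ≤ G.sigmaMax := norm_nonneg _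
  have h0 : 0 ≤ α * G.sigmaMax := mul_nonneg hα.le hσ
  have hgeom : Summable (fun i : ℕ =>
      ((Fintype.card V : ℝ) * (α * G.sigmaMax)) * (α * G.sigmaMax) ^ i) :=
    (summable_geometric_of_lt_one h0 h).mul_left _
  refine Summable.of_nonneg_of_le (fun i => by positivity) (fun i => ?_) hgeom
  calc α ^ (i + 1) * (c i : ℝ)
      ≤ α ^ (i + 1) * ((Fintype.card V : ℝ) * G.sigmaMax ^ (i + 1)) := by
        apply mul_le_mul_of_nonneg_left _ (by positivity)
        exact le_trans (by exact_mod_cast Nat.cast_le.mpr (hc i)) (G.walkCount_le i)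
    _ = ((Fintype.card V : ℝ) * (α * G.sigmaMax)) * (α * G.sigmaMax) ^ i := by
        ring

lemma summable_phi {α : ℝ} (hα : 0 < α) (h : α * G.sigmaMax < 1) (U : Finset V) :
    Summable (fun i : ℕ => α ^ (i + 1) * (G.phiCount (i + 1) U : ℝ)) :=
  G.summable_aux hα h _ (fun i => G.phiCount_le_walkCount (i + 1) U)

lemma summable_hitMiss {α : ℝ} (hα : 0 < α) (h : α * G.sigmaMax < 1) (x : V) (U : Finset V) :
    Summable (fun i : ℕ => α ^ (i + 1) * (G.hitMissCount (i + 1) x U : ℝ)) :=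
  G.summable_aux hα h _ (fun i => G.hitMissCount_le_walkCount (i + 1) x U)

lemma GED_insert {α : ℝ} (hα : 0 < α) (h : α * G.sigmaMax < 1) (x : V) (U : Finset V) :
    G.GED α (insert x U)
      = G.GED α U + ∑' i : ℕ, α ^ (i + 1) * (G.hitMissCount (i + 1) x U : ℝ) := by
  rw [GED, GED, ← Summable.tsum_add (G.summable_phi hα h U) (G.summable_hitMiss hα h x U)]
  refine tsum_congr fun i => ?_
  rw [G.phiCount_insert (i + 1) x U]
  push_cast
  ring

end SimpleGraph

/-- GED-Walk is submodular as a set function. -/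
theorem ged_submodular {V : Type*} [Fintype V] [DecidableEq V]
    (G : SimpleGraph V) [DecidableRel G.Adj] (α : ℝ) (hα : 0 < α)
    (h : α * G.sigmaMax < 1) (S T : Finset V) (hST : S ⊆ T) (x : V) (hx : x ∉ T) :
    G.GED α (insert x S) - G.GED α S ≥ G.GED α (insert x T) - G.GED α T := by
  rw [G.GED_insert hα h x S, G.GED_insert hα h x T]
  simp only [add_sub_cancel_left]
  apply Summable.tsum_le_tsum _ (G.summable_hitMiss hα h x T) (G.summable_hitMiss hα h x S)
  intro i
  apply mul_le_mul_of_nonneg_left _ (by positivity)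
  exact_mod_cast G.hitMissCount_anti (i + 1) x hST
end

section
/- Let n = |V| and let W₁ denote the total number of walks of length 1 in G. If 0 < α < 1/(n³ + n), then G has a vertex cover of size k if and only if there exists a group S ⊆ V with |S| = k and GED(S) ≥ α·W₁. -/
open scoped BigOperators

section AuxLemmas

variable {V : Type*} [Fintype V] [DecidableEq V] (G : SimpleGraph V) [DecidableRel G.Adj]

lemma phiCount_le_pow_aux (i : ℕ) (S : Finset V) :
    (G.phiCount i S : ℝ) ≤ (Fintype.card V : ℝ) ^ (i + 1) := by
  have h : G.phiCount i S ≤ Fintype.card V ^ (i + 1) := by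
    calc G.phiCount i S ≤ (Finset.univ : Finset (Fin (i+1) → V)).card :=
          Finset.card_filter_le _ _
    _ = Fintype.card (Fin (i+1) → V) := Finset.card_univ
    _ = Fintype.card V ^ (i+1) := by simp [Fintype.card_fun]
  exact_mod_cast h

lemma ged_term_le_aux (α : ℝ) (hα : 0 ≤ α) (S : Finset V) (i : ℕ) :
    α ^ (i + 1) * (G.phiCount (i + 1) S : ℝ) ≤
      α * (Fintype.card V : ℝ) ^ 2 * (α * (Fintype.card V : ℝ)) ^ i := by
  have h1 : α ^ (i+1) * (G.phiCount (i+1) S : ℝ) ≤ α ^ (i+1) * (Fintype.card V : ℝ) ^ (i + 2) :=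
    mul_le_mul_of_nonneg_left (phiCount_le_pow_aux G (i+1) S) (by positivity)
  refine h1.trans_eq ?_
  rw [mul_pow]; ring

lemma ged_summable_aux (α : ℝ) (hα : 0 ≤ α) (hr : α * (Fintype.card V : ℝ) < 1) (S : Finset V) :
    Summable (fun i : ℕ => α ^ (i + 1) * (G.phiCount (i + 1) S : ℝ)) := by
  refine Summable.of_nonneg_of_le (fun i => by positivity) (ged_term_le_aux G α hα S)
    (((summable_geometric_of_lt_one (by positivity) hr)).mul_left _)

end AuxLemmas

/-- For `0 < α < 1/(n³+n)`, `G` has a vertex cover of size `k` iff there is a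
group `S` with `|S| = k` and `GED(S) ≥ α·W₁`, where `W₁` is the number of walks of length 1. -/
theorem vertexCover_iff_ged_ge {V : Type*} [Fintype V] [DecidableEq V] [Nonempty V]
    (G : SimpleGraph V) [DecidableRel G.Adj] (k : ℕ) (α : ℝ) (hα : 0 < α)
    (hα' : α < 1 / ((Fintype.card V : ℝ) ^ 3 + Fintype.card V)) :
    (∃ S : Finset V, S.card = k ∧ ∀ u v : V, G.Adj u v → u ∈ S ∨ v ∈ S) ↔
      (∃ S : Finset V, S.card = k ∧ G.GED α S ≥ α * (G.walkCount 1 : ℝ)) := by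
  set n : ℕ := Fintype.card V with hn
  have hn1 : 1 ≤ n := Fintype.card_pos
  have hn1R : (1 : ℝ) ≤ (n : ℝ) := by exact_mod_cast hn1
  have hden : (0 : ℝ) < (n : ℝ) ^ 3 + n := by positivity
  have hαden : α * ((n : ℝ) ^ 3 + n) < 1 := by
    rw [lt_div_iff₀ hden] at hα'; linarith
  have hr : α * (n : ℝ) < 1 := by nlinarith [pow_pos (lt_of_lt_of_le one_pos hn1R) 3]
  have hsum : ∀ S : Finset V,
      Summable (fun i : ℕ => α ^ (i + 1) * (G.phiCount (i + 1) S : ℝ)) :=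
    fun S => ged_summable_aux G α hα.le hr S
  -- the tail bound
  have htail : ∀ S : Finset V,
      (∑' i : ℕ, α ^ (i + 1 + 1) * (G.phiCount (i + 1 + 1) S : ℝ)) < 2 * α := by
    intro S
    have hsumtail : Summable (fun i : ℕ => α ^ (i + 1 + 1) * (G.phiCount (i + 1 + 1) S : ℝ)) :=
      (summable_nat_add_iff 1).2 (hsum S)
    have hgeom : Summable (fun i : ℕ => α ^ 2 * (n : ℝ) ^ 3 * (α * (n : ℝ)) ^ i) :=
      ((summable_geometric_of_lt_one (by positivity) hr)).mul_left _
    have hle : ∀ i : ℕ, α ^ (i + 1 + 1) * (G.phiCount (i + 1 + 1) S : ℝ) ≤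
        α ^ 2 * (n : ℝ) ^ 3 * (α * (n : ℝ)) ^ i := by
      intro i
      have h1 : α ^ (i+2) * (G.phiCount (i+2) S : ℝ) ≤ α ^ (i+2) * (n : ℝ) ^ (i + 3) :=
        mul_le_mul_of_nonneg_left (phiCount_le_pow_aux G (i+2) S) (by positivity)
      calc α ^ (i + 1 + 1) * (G.phiCount (i + 1 + 1) S : ℝ) ≤ α ^ (i+2) * (n : ℝ) ^ (i + 3) := h1
        _ = α ^ 2 * (n : ℝ) ^ 3 * (α * (n : ℝ)) ^ i := by rw [mul_pow]; ring
    have h2 : (∑' i : ℕ, α ^ (i + 1 + 1) * (G.phiCount (i + 1 + 1) S : ℝ)) ≤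
        ∑' i : ℕ, α ^ 2 * (n : ℝ) ^ 3 * (α * (n : ℝ)) ^ i :=
      Summable.tsum_le_tsum hle hsumtail hgeom
    have h3 : (∑' i : ℕ, α ^ 2 * (n : ℝ) ^ 3 * (α * (n : ℝ)) ^ i) =
        α ^ 2 * (n : ℝ) ^ 3 * (1 - α * (n : ℝ))⁻¹ := by
      rw [tsum_mul_left, tsum_geometric_of_lt_one (by positivity) hr]
    have h4 : α ^ 2 * (n : ℝ) ^ 3 * (1 - α * (n : ℝ))⁻¹ < 2 * α := by
      rw [mul_inv_lt_iff₀ (by linarith)]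
      nlinarith
    calc (∑' i : ℕ, α ^ (i + 1 + 1) * (G.phiCount (i + 1 + 1) S : ℝ))
        ≤ _ := h2
      _ = _ := h3
      _ < 2 * α := h4
  have hsplit : ∀ S : Finset V, G.GED α S =
      α * (G.phiCount 1 S : ℝ) + ∑' i : ℕ, α ^ (i + 1 + 1) * (G.phiCount (i + 1 + 1) S : ℝ) := by
    intro S
    rw [SimpleGraph.GED, Summable.tsum_eq_zero_add (hsum S)]
    norm_num
  constructor
  · rintro ⟨S, hk, hcov⟩
    refine ⟨S, hk, ?_⟩
    have hphi : G.phiCount 1 S = G.walkCount 1 := by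
      unfold SimpleGraph.phiCount SimpleGraph.walkCount
      congr 1
      apply Finset.filter_congr
      intro p _
      simp only [iff_iff_implies_and_implies]
      constructor
      · rintro ⟨h, -⟩; exact h
      · intro h
        refine ⟨h, ?_⟩
        have hadj : G.Adj (p 0) (p 1) := h 0
        rcases hcov _ _ hadj with h' | h'
        · exact ⟨0, h'⟩
        · exact ⟨1, h'⟩
    have htnn : 0 ≤ ∑' i : ℕ, α ^ (i + 1 + 1) * (G.phiCount (i + 1 + 1) S : ℝ) :=
      tsum_nonneg fun i => by positivity
    rw [ge_iff_le, hsplit S, hphi]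
    linarith
  · rintro ⟨S, hk, hged⟩
    refine ⟨S, hk, ?_⟩
    by_contra hcov
    push_neg at hcov
    obtain ⟨u, v, hadj, hu, hv⟩ := hcov
    have huv : u ≠ v := G.ne_of_adj hadj
    -- two walks missing S
    set p1 : Fin 2 → V := ![u, v] with hp1
    set p2 : Fin 2 → V := ![v, u] with hp2
    have hw1 : G.IsWalkFun 1 p1 := by
      intro j; fin_cases j; simpa [hp1] using hadj
    have hw2 : G.IsWalkFun 1 p2 := by
      intro j; fin_cases j; simpa [hp2] using hadj.symm
    have hm1 : ¬ ∃ j, p1 j ∈ S := by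
      rintro ⟨j, hj⟩
      fin_cases j
      · exact hu (by simpa [hp1] using hj)
      · exact hv (by simpa [hp1] using hj)
    have hm2 : ¬ ∃ j, p2 j ∈ S := by
      rintro ⟨j, hj⟩
      fin_cases j
      · exact hv (by simpa [hp2] using hj)
      · exact hu (by simpa [hp2] using hj)
    have hne : p1 ≠ p2 := by
      intro h
      have := congrFun h 0
      simp [hp1, hp2] at this
      exact huv this
    have hcard : G.phiCount 1 S + 2 ≤ G.walkCount 1 := by
      have hsub : insert p1 (insert p2
          (Finset.univ.filter fun p : Fin 2 → V => G.IsWalkFun 1 p ∧ ∃ j, p j ∈ S)) ⊆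
          Finset.univ.filter fun p : Fin 2 → V => G.IsWalkFun 1 p := by
        intro p hp
        simp only [Finset.mem_insert, Finset.mem_filter, Finset.mem_univ, true_and] at hp ⊢
        rcases hp with rfl | rfl | ⟨h, -⟩
        · exact hw1
        · exact hw2
        · exact h
      have hp2nm : p2 ∉ (Finset.univ.filter fun p : Fin 2 → V =>
          G.IsWalkFun 1 p ∧ ∃ j, p j ∈ S) := by
        simp only [Finset.mem_filter]; tauto
      have hp1nm : p1 ∉ insert p2 (Finset.univ.filter fun p : Fin 2 → V =>
          G.IsWalkFun 1 p ∧ ∃ j, p j ∈ S) := by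
        simp only [Finset.mem_insert, Finset.mem_filter, Finset.mem_univ, true_and, not_or]
        exact ⟨hne, fun h => hm1 h.2⟩
      have := Finset.card_le_card hsub
      rw [Finset.card_insert_of_notMem hp1nm, Finset.card_insert_of_notMem hp2nm] at this
      have h6 : G.phiCount 1 S + 1 + 1 ≤ G.walkCount 1 := this
      linarith
    have hcardR : (G.phiCount 1 S : ℝ) + 2 ≤ (G.walkCount 1 : ℝ) := by exact_mod_cast hcard
    have := htail S
    rw [ge_iff_le, hsplit S] at hged
    nlinarith
end

section
/- Let n = |V| ≥ 1. If 0 < α < 1/(n³ + n), then for every S ⊆ V the tail of the GED-Walk series beyond length 1 satisfies Σ_{i=2}^∞ α^i φ_i(S) < α. -/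
open scoped BigOperators

/-- If `0 < α < 1/(n³+n)` with `n = |V| ≥ 1`, then for every `S ⊆ V`,
`Σ_{i=2}^∞ α^i φ_i(S) < α`. -/
theorem ged_tail_from_two_lt {V : Type*} [Fintype V] [DecidableEq V] [Nonempty V]
    (G : SimpleGraph V) [DecidableRel G.Adj] (α : ℝ) (hα : 0 < α)
    (hα' : α < 1 / ((Fintype.card V : ℝ) ^ 3 + Fintype.card V)) (S : Finset V) :
    (∑' i : ℕ, α ^ (i + 2) * (G.phiCount (i + 2) S : ℝ)) < α := by
  set n : ℝ := (Fintype.card V : ℝ) with hn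
  have hn1 : (1 : ℝ) ≤ n := by
    have h : 1 ≤ Fintype.card V := Fintype.card_pos
    rw [hn]; exact_mod_cast h
  have hnpos : (0 : ℝ) < n := lt_of_lt_of_le one_pos hn1
  have hden : (0 : ℝ) < n ^ 3 + n := by positivity
  have hα'' : α * (n ^ 3 + n) < 1 := by
    have := (lt_div_iff₀ hden).mp hα'
    linarith
  have hαn : α * n < 1 := by nlinarith [mul_pos hα (pow_pos hnpos 3)]
  have hαn0 : 0 ≤ α * n := by positivity
  have hφ : ∀ i : ℕ, (G.phiCount (i + 2) S : ℝ) ≤ n ^ (i + 3) := by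
    intro i
    have hcard : (G.phiCount (i + 2) S : ℕ) ≤ Fintype.card (Fin (i + 3) → V) := by
      unfold SimpleGraph.phiCount
      exact le_trans (Finset.card_filter_le _ _) (le_of_eq (Finset.card_univ))
    have : (G.phiCount (i + 2) S : ℕ) ≤ Fintype.card V ^ (i + 3) := by
      simpa [Fintype.card_fun] using hcard
    calc (G.phiCount (i + 2) S : ℝ) ≤ ((Fintype.card V ^ (i + 3) : ℕ) : ℝ) := by exact_mod_cast this
      _ = n ^ (i + 3) := by push_cast [hn]; ring
  -- geometric bound
  have hle : ∀ i : ℕ, α ^ (i + 2) * (G.phiCount (i + 2) S : ℝ) ≤ α ^ 2 * n ^ 3 * (α * n) ^ i := by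
    intro i
    have h1 : α ^ (i + 2) * (G.phiCount (i + 2) S : ℝ) ≤ α ^ (i + 2) * n ^ (i + 3) := by
      exact mul_le_mul_of_nonneg_left (hφ i) (by positivity)
    calc α ^ (i + 2) * (G.phiCount (i + 2) S : ℝ) ≤ α ^ (i + 2) * n ^ (i + 3) := h1
      _ = α ^ 2 * n ^ 3 * (α * n) ^ i := by ring
  have hgsum : Summable (fun i : ℕ => α ^ 2 * n ^ 3 * (α * n) ^ i) :=
    (summable_geometric_of_lt_one hαn0 hαn).mul_left _
  have hsum : Summable (fun i : ℕ => α ^ (i + 2) * (G.phiCount (i + 2) S : ℝ)) := by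
    refine Summable.of_nonneg_of_le (fun i => by positivity) hle hgsum
  have htsum : (∑' i : ℕ, α ^ (i + 2) * (G.phiCount (i + 2) S : ℝ))
      ≤ ∑' i : ℕ, α ^ 2 * n ^ 3 * (α * n) ^ i :=
    Summable.tsum_le_tsum hle hsum hgsum
  have hgeo : (∑' i : ℕ, α ^ 2 * n ^ 3 * (α * n) ^ i) = α ^ 2 * n ^ 3 * (1 - α * n)⁻¹ := by
    rw [tsum_mul_left, tsum_geometric_of_lt_one hαn0 hαn]
  have h1αn : 0 < 1 - α * n := by linarith
  have hfinal : α ^ 2 * n ^ 3 * (1 - α * n)⁻¹ < α := by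
    rw [mul_inv_lt_iff₀ h1αn]
    nlinarith
  calc (∑' i : ℕ, α ^ (i + 2) * (G.phiCount (i + 2) S : ℝ))
      ≤ α ^ 2 * n ^ 3 * (1 - α * n)⁻¹ := by rw [← hgeo]; exact htsum
    _ < α := hfinal
end

section
/- Combinatorial tail bound: if deg_max denotes the maximum vertex degree of G and α·deg_max < 1 with α > 0, then for every ℓ ≥ 1, GED_{>ℓ}(V) ≤ α^{ℓ+1} · (deg_max / (1 − α·deg_max)) · Σ_{x∈V} ω_ℓ(x). -/
open scoped BigOperators

namespace GEDAux

set_option linter.unusedSectionVars false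

variable {V : Type*} [Fintype V] [DecidableEq V] (G : SimpleGraph V) [DecidableRel G.Adj]

lemma isWalkFun_snoc (i : ℕ) (q : Fin (i + 1) → V) (v : V) :
    G.IsWalkFun (i + 1) (Fin.snoc q v) ↔ G.IsWalkFun i q ∧ G.Adj (q (Fin.last i)) v := by
  constructor
  · intro h
    refine ⟨fun j => ?_, ?_⟩
    · have := h j.castSucc
      rw [Fin.succ_castSucc, Fin.snoc_castSucc, Fin.snoc_castSucc] at this
      exact this
    · have := h (Fin.last i)
      simpa [Fin.succ_last] using this
  · rintro ⟨h1, h2⟩ j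
    induction j using Fin.lastCases with
    | last => simpa [Fin.succ_last] using h2
    | cast k =>
      rw [Fin.succ_castSucc, Fin.snoc_castSucc, Fin.snoc_castSucc]
      exact h1 k

lemma endCount_eq (i : ℕ) (v : V) :
    (((Finset.univ.filter fun p : Fin (i + 1) → V =>
        G.IsWalkFun i p ∧ p (Fin.last i) = v).card : ℕ) : ℝ)
      = ∑ x : V, (G.adjMatrix ℝ ^ i) x v := by
  induction i generalizing v with
  | zero =>
    have hset : (Finset.univ.filter fun p : Fin 1 → V =>
        G.IsWalkFun 0 p ∧ p (Fin.last 0) = v) = {fun _ => v} := by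
      ext p
      simp only [Finset.mem_filter, Finset.mem_univ, true_and, Finset.mem_singleton]
      simp only [SimpleGraph.IsWalkFun]
      constructor
      · rintro ⟨-, hp⟩
        funext j
        have : j = Fin.last 0 := Subsingleton.elim _ _
        rw [this, hp]
      · rintro rfl
        exact ⟨fun j => j.elim0, rfl⟩
    rw [hset]
    simp [Matrix.one_apply]
  | succ i ih =>
    have hfib : (Finset.univ.filter fun p : Fin (i + 2) → V =>
        G.IsWalkFun (i + 1) p ∧ p (Fin.last (i + 1)) = v).card
        = ∑ u : V, ((Finset.univ.filter fun p : Fin (i + 2) → V =>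
            G.IsWalkFun (i + 1) p ∧ p (Fin.last (i + 1)) = v).filter
              fun p => p ((Fin.last i).castSucc) = u).card := by
      exact Finset.card_eq_sum_card_fiberwise (fun p _ => Finset.mem_univ _)
    have hfib2 : ∀ u : V, (((Finset.univ.filter fun p : Fin (i + 2) → V =>
            G.IsWalkFun (i + 1) p ∧ p (Fin.last (i + 1)) = v).filter
              fun p => p ((Fin.last i).castSucc) = u).card : ℝ)
        = ((Finset.univ.filter fun q : Fin (i + 1) → V =>
            G.IsWalkFun i q ∧ q (Fin.last i) = u).card : ℝ) * (G.adjMatrix ℝ) u v := by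
      intro u
      by_cases hadj : G.Adj u v
      · rw [SimpleGraph.adjMatrix_apply, if_pos hadj, mul_one]
        norm_cast
        apply Finset.card_nbij' (i := fun p => Fin.init p) (j := fun q => Fin.snoc q v)
        · rintro p hp
          simp only [Finset.mem_filter, Finset.mem_univ, true_and, Finset.mem_coe] at hp ⊢
          obtain ⟨⟨hw, hl⟩, hu⟩ := hp
          have hps : p = Fin.snoc (Fin.init p) v := by
            rw [← hl]; exact (Fin.snoc_init_self p).symm
          rw [hps] at hw
          rw [isWalkFun_snoc] at hw
          exact ⟨hw.1, by simpa [Fin.init] using hu⟩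
        · rintro q hq
          simp only [Finset.mem_filter, Finset.mem_univ, true_and, Finset.mem_coe] at hq ⊢
          obtain ⟨hw, hl⟩ := hq
          refine ⟨⟨?_, by simp⟩, by simpa using hl⟩
          rw [isWalkFun_snoc]
          exact ⟨hw, hl ▸ hadj⟩
        · rintro p hp
          simp only [Finset.mem_filter, Finset.mem_univ, true_and, Finset.mem_coe] at hp
          rw [← hp.1.2]
          exact Fin.snoc_init_self p
        · rintro q hq
          simp
      · rw [SimpleGraph.adjMatrix_apply, if_neg hadj, mul_zero]
        norm_num
        intro p hw hl
        intro hu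
        exact hadj (by rw [← hu, ← hl]; exact hw (Fin.last i))
    rw [hfib]
    push_cast
    rw [Finset.sum_congr rfl fun u _ => hfib2 u]
    have : ∀ u : V, (((Finset.univ.filter fun q : Fin (i + 1) → V =>
        G.IsWalkFun i q ∧ q (Fin.last i) = u).card : ℕ) : ℝ) * (G.adjMatrix ℝ) u v
        = (∑ x : V, (G.adjMatrix ℝ ^ i) x u) * (G.adjMatrix ℝ) u v := by
      intro u; rw [ih]
    rw [Finset.sum_congr rfl fun u _ => this u]
    rw [pow_succ]
    simp_rw [Matrix.mul_apply, Finset.sum_mul]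
    exact Finset.sum_comm

lemma adjpow_nonneg : ∀ (i : ℕ) (x y : V), 0 ≤ (G.adjMatrix ℝ ^ i) x y := by
  intro i
  induction i with
  | zero => intro x y; simp [Matrix.one_apply]; positivity
  | succ i ih =>
    intro x y
    rw [pow_succ, Matrix.mul_apply]
    refine Finset.sum_nonneg fun u _ => mul_nonneg (ih x u) ?_
    rw [SimpleGraph.adjMatrix_apply]
    positivity

lemma adj_row_sum (y : V) : ∑ z : V, (G.adjMatrix ℝ) y z = (G.degree y : ℝ) := by
  simp [SimpleGraph.adjMatrix_apply, SimpleGraph.degree, SimpleGraph.neighborFinset_eq_filter]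

lemma omega_succ_le (i : ℕ) (x : V) :
    G.omegaCount (i + 1) x ≤ (G.maxDegree : ℝ) * G.omegaCount i x := by
  unfold SimpleGraph.omegaCount
  rw [pow_succ]
  simp_rw [Matrix.mul_apply]
  rw [Finset.sum_comm]
  calc ∑ y : V, ∑ z : V, (G.adjMatrix ℝ ^ i) x y * (G.adjMatrix ℝ) y z
      = ∑ y : V, (G.adjMatrix ℝ ^ i) x y * (G.degree y : ℝ) := by
        refine Finset.sum_congr rfl fun y _ => ?_
        rw [← Finset.mul_sum, adj_row_sum]
    _ ≤ ∑ y : V, (G.adjMatrix ℝ ^ i) x y * (G.maxDegree : ℝ) := by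
        refine Finset.sum_le_sum fun y _ => ?_
        exact mul_le_mul_of_nonneg_left (by exact_mod_cast G.degree_le_maxDegree y)
          (adjpow_nonneg G i x y)
    _ = (G.maxDegree : ℝ) * ∑ y : V, (G.adjMatrix ℝ ^ i) x y := by
        rw [← Finset.sum_mul, mul_comm]

lemma omega_nonneg (i : ℕ) (x : V) : 0 ≤ G.omegaCount i x :=
  Finset.sum_nonneg fun z _ => adjpow_nonneg G i x z

lemma sum_omega_succ_le (i : ℕ) :
    ∑ x : V, G.omegaCount (i + 1) x ≤ (G.maxDegree : ℝ) * ∑ x : V, G.omegaCount i x := by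
  rw [Finset.mul_sum]
  exact Finset.sum_le_sum fun x _ => omega_succ_le G i x

lemma phiCount_univ [Nonempty V] (i : ℕ) :
    ((G.phiCount i Finset.univ : ℕ) : ℝ) = ∑ x : V, G.omegaCount i x := by
  have h1 : G.phiCount i Finset.univ
      = (Finset.univ.filter fun p : Fin (i + 1) → V => G.IsWalkFun i p).card := by
    unfold SimpleGraph.phiCount
    congr 1
    apply Finset.filter_congr
    intro p _
    simp only [Finset.mem_univ, and_iff_left_iff_imp]
    exact fun _ => ⟨0, by simp⟩
  rw [h1]
  have h2 : (Finset.univ.filter fun p : Fin (i + 1) → V => G.IsWalkFun i p).card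
      = ∑ v : V, (Finset.univ.filter fun p : Fin (i + 1) → V =>
          G.IsWalkFun i p ∧ p (Fin.last i) = v).card := by
    rw [Finset.card_eq_sum_card_fiberwise (f := fun p => p (Fin.last i)) (t := Finset.univ)
      (fun p _ => Finset.mem_univ _)]
    refine Finset.sum_congr rfl fun v _ => ?_
    rw [Finset.filter_filter]
  rw [h2]
  push_cast
  rw [Finset.sum_congr rfl fun v _ => endCount_eq G i v]
  unfold SimpleGraph.omegaCount
  exact Finset.sum_comm

end GEDAux

/-- combinatorial tail bound via the maximum degree. -/
theorem ged_tail_combinatorial_bound {V : Type*} [Fintype V] [DecidableEq V] [Nonempty V]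
    (G : SimpleGraph V) [DecidableRel G.Adj] (α : ℝ) (hα : 0 < α)
    (h : α * (G.maxDegree : ℝ) < 1) (ℓ : ℕ) (hℓ : 1 ≤ ℓ) :
    G.GEDtail α ℓ Finset.univ ≤
      α ^ (ℓ + 1) * ((G.maxDegree : ℝ) / (1 - α * (G.maxDegree : ℝ))) *
        ∑ x : V, G.omegaCount ℓ x := by
  set d : ℝ := (G.maxDegree : ℝ) with hd
  have hd0 : 0 ≤ d := Nat.cast_nonneg _
  set r : ℝ := α * d with hrdef
  have hr0 : 0 ≤ r := mul_nonneg hα.le hd0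
  have hr1 : r < 1 := h
  set T : ℝ := ∑ x : V, G.omegaCount ℓ x with hT
  have hT0 : 0 ≤ T := Finset.sum_nonneg fun x _ => GEDAux.omega_nonneg G ℓ x
  have hbound : ∀ i : ℕ, ∑ x : V, G.omegaCount (ℓ + 1 + i) x ≤ d ^ (i + 1) * T := by
    intro i
    induction i with
    | zero => simpa using GEDAux.sum_omega_succ_le G ℓ
    | succ i ih =>
      have : ℓ + 1 + (i + 1) = (ℓ + 1 + i) + 1 := by ring
      rw [this]
      calc ∑ x : V, G.omegaCount (ℓ + 1 + i + 1) x
          ≤ d * ∑ x : V, G.omegaCount (ℓ + 1 + i) x := GEDAux.sum_omega_succ_le G _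
        _ ≤ d * (d ^ (i + 1) * T) := mul_le_mul_of_nonneg_left ih hd0
        _ = d ^ (i + 1 + 1) * T := by ring
  have hterm : ∀ i : ℕ, α ^ (ℓ + 1 + i) * (G.phiCount (ℓ + 1 + i) Finset.univ : ℝ)
      ≤ (α ^ (ℓ + 1) * d * T) * r ^ i := by
    intro i
    rw [GEDAux.phiCount_univ]
    calc α ^ (ℓ + 1 + i) * ∑ x : V, G.omegaCount (ℓ + 1 + i) x
        ≤ α ^ (ℓ + 1 + i) * (d ^ (i + 1) * T) :=
          mul_le_mul_of_nonneg_left (hbound i) (by positivity)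
      _ = (α ^ (ℓ + 1) * d * T) * r ^ i := by
          rw [hrdef, mul_pow, pow_add, pow_succ]
          ring
  have hterm0 : ∀ i : ℕ, 0 ≤ α ^ (ℓ + 1 + i) * (G.phiCount (ℓ + 1 + i) Finset.univ : ℝ) := by
    intro i; positivity
  have hgsum : Summable fun i : ℕ => (α ^ (ℓ + 1) * d * T) * r ^ i :=
    (summable_geometric_of_lt_one hr0 hr1).mul_left _
  have hfsum : Summable fun i : ℕ =>
      α ^ (ℓ + 1 + i) * (G.phiCount (ℓ + 1 + i) Finset.univ : ℝ) :=
    Summable.of_nonneg_of_le hterm0 hterm hgsum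
  calc G.GEDtail α ℓ Finset.univ
      ≤ ∑' i : ℕ, (α ^ (ℓ + 1) * d * T) * r ^ i := Summable.tsum_le_tsum hterm hfsum hgsum
    _ = (α ^ (ℓ + 1) * d * T) * (1 - r)⁻¹ := by
        rw [tsum_mul_left, tsum_geometric_of_lt_one hr0 hr1]
    _ = α ^ (ℓ + 1) * (d / (1 - r)) * T := by ring
end

section
/- Spectral tail bound: if α·σ_max < 1 with α > 0, then for every ℓ ≥ 1, GED_{>ℓ}(V) ≤ √|V| · α^{ℓ+1} · (σ_max / (1 − α·σ_max)) · Σ_{x∈V} ω_ℓ(x). -/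
open scoped BigOperators

private lemma endCount_eq {V : Type*} [Fintype V] [DecidableEq V] (G : SimpleGraph V)
    [DecidableRel G.Adj] (i : ℕ) (v : V) :
    ((Finset.univ.filter fun p : Fin (i + 1) → V =>
        G.IsWalkFun i p ∧ p (Fin.last i) = v).card : ℝ)
      = ∑ x : V, (G.adjMatrix ℝ ^ i) x v := by
  induction i generalizing v with
  | zero =>
    have hset : (Finset.univ.filter fun p : Fin 1 → V =>
        G.IsWalkFun 0 p ∧ p (Fin.last 0) = v) = {fun _ => v} := by
      ext p
      simp only [Finset.mem_filter, Finset.mem_univ, true_and, Finset.mem_singleton]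
      constructor
      · rintro ⟨-, hp⟩
        funext j
        have hj : j = Fin.last 0 := Subsingleton.elim _ _
        rw [hj, hp]
      · rintro rfl
        exact ⟨fun j => j.elim0, rfl⟩
    rw [hset]
    simp [Matrix.one_apply]
  | succ i ih =>
    have key : (Finset.univ.filter fun p : Fin (i + 2) → V =>
        G.IsWalkFun (i + 1) p ∧ p (Fin.last (i + 1)) = v).card
        = ∑ u : V, if G.Adj u v then (Finset.univ.filter fun q : Fin (i + 1) → V =>
            G.IsWalkFun i q ∧ q (Fin.last i) = u).card else 0 := by
      rw [Finset.card_eq_sum_card_fiberwise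
        (f := fun p : Fin (i + 2) → V => p (Fin.last i).castSucc) (t := Finset.univ)
        (fun p _ => Finset.mem_univ _)]
      refine Finset.sum_congr rfl fun u _ => ?_
      simp only [Finset.filter_filter]
      by_cases hu : G.Adj u v
      · rw [if_pos hu]
        refine Finset.card_bij'
          (fun p _ => fun j : Fin (i + 1) => p j.castSucc)
          (fun q _ => Fin.snoc q v) ?_ ?_ ?_ ?_
        · intro p hp
          simp only [Finset.mem_filter, Finset.mem_univ, true_and] at hp ⊢
          obtain ⟨⟨hw, -⟩, hlast⟩ := hp
          refine ⟨fun j => ?_, hlast⟩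
          have := hw j.castSucc
          rwa [Fin.succ_castSucc] at this
        · intro q hq
          simp only [Finset.mem_filter, Finset.mem_univ, true_and] at hq ⊢
          obtain ⟨hw, hlast⟩ := hq
          refine ⟨⟨fun j => ?_, ?_⟩, ?_⟩
          · refine Fin.lastCases ?_ (fun k => ?_) j
            · rw [Fin.succ_last, Fin.snoc_last, Fin.snoc_castSucc, hlast]
              exact hu
            · rw [Fin.succ_castSucc, Fin.snoc_castSucc, Fin.snoc_castSucc]
              exact hw k
          · rw [Fin.snoc_last]
          · rw [Fin.snoc_castSucc, hlast]
        · intro p hp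
          simp only [Finset.mem_filter, Finset.mem_univ, true_and] at hp
          funext j
          refine Fin.lastCases ?_ (fun k => ?_) j
          · simp only [Fin.snoc_last]
            exact hp.1.2.symm
          · simp only [Fin.snoc_castSucc]
        · intro q hq
          funext j
          simp [Fin.snoc_castSucc]
      · rw [if_neg hu, Finset.card_eq_zero, Finset.filter_eq_empty_iff]
        rintro p - ⟨⟨hw, hlast⟩, hmid⟩
        have := hw (Fin.last i)
        rw [Fin.succ_last, hmid, hlast] at this
        exact absurd this hu
    have hrhs : ∑ x : V, (G.adjMatrix ℝ ^ (i + 1)) x v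
        = ∑ u : V, (if G.Adj u v then ∑ x : V, (G.adjMatrix ℝ ^ i) x u else 0) := by
      simp only [pow_succ, Matrix.mul_apply]
      rw [Finset.sum_comm]
      refine Finset.sum_congr rfl fun u _ => ?_
      rw [← Finset.sum_mul]
      simp [SimpleGraph.adjMatrix_apply, mul_ite]
    rw [key, hrhs, Nat.cast_sum]
    refine Finset.sum_congr rfl fun u _ => ?_
    rw [Nat.cast_ite, Nat.cast_zero, ih u]

private lemma phi_univ_eq {V : Type*} [Fintype V] [DecidableEq V] (G : SimpleGraph V)
    [DecidableRel G.Adj] (i : ℕ) :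
    (G.phiCount i Finset.univ : ℝ) = ∑ x : V, G.omegaCount i x := by
  have h1 : G.phiCount i Finset.univ
      = (Finset.univ.filter fun p : Fin (i + 1) → V => G.IsWalkFun i p).card := by
    unfold SimpleGraph.phiCount
    congr 1
    refine Finset.filter_congr fun p _ => ?_
    exact and_iff_left ⟨0, Finset.mem_univ _⟩
  rw [h1, Finset.card_eq_sum_card_fiberwise
    (f := fun p : Fin (i + 1) → V => p (Fin.last i)) (t := Finset.univ)
    (fun p _ => Finset.mem_univ _), Nat.cast_sum]
  simp only [Finset.filter_filter]
  calc (∑ v : V, ((Finset.univ.filter fun p : Fin (i + 1) → V =>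
          G.IsWalkFun i p ∧ p (Fin.last i) = v).card : ℝ))
      = ∑ v : V, ∑ x : V, (G.adjMatrix ℝ ^ i) x v :=
        Finset.sum_congr rfl fun v _ => endCount_eq G i v
    _ = ∑ x : V, G.omegaCount i x := by rw [Finset.sum_comm]; rfl

/-- spectral tail bound via the largest singular value. -/
theorem ged_tail_spectral_bound {V : Type*} [Fintype V] [DecidableEq V] [Nonempty V]
    (G : SimpleGraph V) [DecidableRel G.Adj] (α : ℝ) (hα : 0 < α)
    (h : α * G.sigmaMax < 1) (ℓ : ℕ) (hℓ : 1 ≤ ℓ) :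
    G.GEDtail α ℓ Finset.univ ≤
      Real.sqrt (Fintype.card V) * α ^ (ℓ + 1) * (G.sigmaMax / (1 - α * G.sigmaMax)) *
        ∑ x : V, G.omegaCount ℓ x := by
  classical
  set A := G.adjMatrix ℝ with hA
  set T := Matrix.toEuclideanCLM (𝕜 := ℝ) A with hT
  set σ := G.sigmaMax with hσdef
  have hσT : σ = ‖T‖ := rfl
  have hσ0 : 0 ≤ σ := by rw [hσT]; exact norm_nonneg _
  set one : EuclideanSpace ℝ V := (WithLp.equiv 2 (V → ℝ)).symm (fun _ => 1) with hone_def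
  have hTk : ∀ k : ℕ, (T ^ k) one
      = (WithLp.equiv 2 (V → ℝ)).symm ((A ^ k).mulVec fun _ => 1) := by
    intro k
    rw [hT, ← map_pow, hone_def, WithLp.equiv_symm_apply, Matrix.toEuclideanCLM_toLp]
  have hux : ∀ (k : ℕ) (x : V), ((T ^ k) one) x = G.omegaCount k x := by
    intro k x
    rw [hTk k]
    simp [SimpleGraph.omegaCount, Matrix.mulVec, dotProduct,
      WithLp.equiv_symm_apply, hA]
  have homega : ∀ k : ℕ, ∑ x : V, G.omegaCount k x = inner ℝ one ((T ^ k) one) := by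
    intro k
    rw [PiLp.inner_apply]
    refine (Finset.sum_congr rfl fun x _ => ?_).symm
    rw [hux k x]
    simp [hone_def, WithLp.equiv_symm_apply, RCLike.inner_apply]
  have hApow : ∀ (k : ℕ) (x z : V), 0 ≤ (A ^ k) x z := by
    intro k x z
    rw [hA, SimpleGraph.adjMatrix_pow_apply_eq_card_walk]
    exact Nat.cast_nonneg _
  have hω0 : ∀ (k : ℕ) (x : V), 0 ≤ G.omegaCount k x := fun k x =>
    Finset.sum_nonneg fun z _ => hApow k x z
  set W := ∑ x : V, G.omegaCount ℓ x with hWdef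
  have hW0 : 0 ≤ W := Finset.sum_nonneg fun x _ => hω0 ℓ x
  have hone_norm : ‖one‖ = Real.sqrt (Fintype.card V) := by
    rw [EuclideanSpace.norm_eq]
    simp [hone_def, WithLp.equiv_symm_apply]
  -- ℓ² norm of T^ℓ one bounded by its ℓ¹ norm = W
  have hub : ‖(T ^ ℓ) one‖ ≤ W := by
    rw [EuclideanSpace.norm_eq]
    have h1 : ∑ x : V, ‖((T ^ ℓ) one) x‖ ^ 2 ≤ W ^ 2 := by
      have : ∀ x : V, ‖((T ^ ℓ) one) x‖ ^ 2 ≤ G.omegaCount ℓ x * W := by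
        intro x
        rw [hux ℓ x, Real.norm_eq_abs, abs_of_nonneg (hω0 ℓ x), sq]
        refine mul_le_mul_of_nonneg_left ?_ (hω0 ℓ x)
        exact Finset.single_le_sum (fun z _ => hω0 ℓ z) (Finset.mem_univ x)
      calc ∑ x : V, ‖((T ^ ℓ) one) x‖ ^ 2 ≤ ∑ x : V, G.omegaCount ℓ x * W :=
            Finset.sum_le_sum fun x _ => this x
        _ = W ^ 2 := by rw [← Finset.sum_mul, sq]
    calc Real.sqrt (∑ x : V, ‖((T ^ ℓ) one) x‖ ^ 2) ≤ Real.sqrt (W ^ 2) :=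
          Real.sqrt_le_sqrt h1
      _ = W := Real.sqrt_sq hW0
  have key : ∀ i : ℕ, α ^ (ℓ + 1 + i) * (G.phiCount (ℓ + 1 + i) Finset.univ : ℝ)
      ≤ (Real.sqrt (Fintype.card V) * α ^ (ℓ + 1) * σ * W) * (α * σ) ^ i := by
    intro i
    rw [phi_univ_eq]
    have e1 : (T ^ (ℓ + 1 + i)) one = (T ^ (i + 1)) ((T ^ ℓ) one) := by
      have hn : ℓ + 1 + i = i + 1 + ℓ := by omega
      rw [hn, pow_add, ContinuousLinearMap.mul_apply]
    have h2 : ∑ x : V, G.omegaCount (ℓ + 1 + i) x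
        ≤ Real.sqrt (Fintype.card V) * (σ ^ (i + 1) * W) := by
      rw [homega, e1]
      calc inner ℝ one ((T ^ (i + 1)) ((T ^ ℓ) one))
          ≤ ‖one‖ * ‖(T ^ (i + 1)) ((T ^ ℓ) one)‖ := real_inner_le_norm _ _
        _ ≤ Real.sqrt (Fintype.card V) * (σ ^ (i + 1) * W) := by
            rw [hone_norm]
            refine mul_le_mul_of_nonneg_left ?_ (Real.sqrt_nonneg _)
            calc ‖(T ^ (i + 1)) ((T ^ ℓ) one)‖
                ≤ ‖T ^ (i + 1)‖ * ‖(T ^ ℓ) one‖ := ContinuousLinearMap.le_opNorm _ _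
              _ ≤ σ ^ (i + 1) * W := by
                  refine mul_le_mul ?_ hub (norm_nonneg _) (by positivity)
                  rw [hσT]
                  exact norm_pow_le' T (Nat.succ_pos i)
    calc α ^ (ℓ + 1 + i) * ∑ x : V, G.omegaCount (ℓ + 1 + i) x
        ≤ α ^ (ℓ + 1 + i) * (Real.sqrt (Fintype.card V) * (σ ^ (i + 1) * W)) := by
          refine mul_le_mul_of_nonneg_left h2 (by positivity)
      _ = (Real.sqrt (Fintype.card V) * α ^ (ℓ + 1) * σ * W) * (α * σ) ^ i := by
          rw [pow_add, pow_succ, mul_pow]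
          ring
  have hr0 : 0 ≤ α * σ := mul_nonneg hα.le hσ0
  have hgeom : Summable fun i : ℕ => (Real.sqrt (Fintype.card V) * α ^ (ℓ + 1) * σ * W)
      * (α * σ) ^ i :=
    (summable_geometric_of_lt_one hr0 h).mul_left _
  have hterm0 : ∀ i : ℕ, 0 ≤ α ^ (ℓ + 1 + i) * (G.phiCount (ℓ + 1 + i) Finset.univ : ℝ) :=
    fun i => by positivity
  have hsum : Summable fun i : ℕ =>
      α ^ (ℓ + 1 + i) * (G.phiCount (ℓ + 1 + i) Finset.univ : ℝ) :=
    Summable.of_nonneg_of_le hterm0 key hgeom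
  calc G.GEDtail α ℓ Finset.univ
      ≤ ∑' i : ℕ, (Real.sqrt (Fintype.card V) * α ^ (ℓ + 1) * σ * W) * (α * σ) ^ i :=
        Summable.tsum_le_tsum key hsum hgeom
    _ = (Real.sqrt (Fintype.card V) * α ^ (ℓ + 1) * σ * W) * (1 - α * σ)⁻¹ := by
        rw [tsum_mul_left, tsum_geometric_of_lt_one hr0 h]
    _ = Real.sqrt (Fintype.card V) * α ^ (ℓ + 1) * (σ / (1 - α * σ)) * W := by
        ring
end

section
/- If α·σ_max < 1 with α > 0, then for every S ⊆ V and every ℓ ≥ 1 the tail of the GED-Walk series satisfies GED_{>ℓ}(S) ≤ |V|² · (α·σ_max)^{ℓ+1} / (1 − α·σ_max). -/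
open scoped BigOperators

section GedAux

open Finset

variable {V : Type*} [Fintype V] [DecidableEq V] (G : SimpleGraph V) [DecidableRel G.Adj]

private lemma ged_entry_le_norm (M : Matrix V V ℝ) (x z : V) :
    M x z ≤ ‖Matrix.toEuclideanCLM (𝕜 := ℝ) M‖ := by
  set T := Matrix.toEuclideanCLM (𝕜 := ℝ) M with hT
  have hx : ‖EuclideanSpace.single x (1:ℝ)‖ = 1 := by
    simp [EuclideanSpace.norm_single]
  have hz : ‖EuclideanSpace.single z (1:ℝ)‖ = 1 := by
    simp [EuclideanSpace.norm_single]
  have key : (inner ℝ (EuclideanSpace.single x (1:ℝ)) (T (EuclideanSpace.single z (1:ℝ))) : ℝ)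
      = M x z := by
    rw [EuclideanSpace.inner_single_left]
    have : T (EuclideanSpace.single z (1:ℝ)) =
        (WithLp.equiv _ _).symm (Matrix.toLin' M (Pi.single z 1)) := by
      rw [hT, ← EuclideanSpace.toLp_single]; rfl
    rw [this]
    simp [Matrix.toLin'_apply, Matrix.mulVec_single]
  calc M x z
      = (inner ℝ (EuclideanSpace.single x (1:ℝ)) (T (EuclideanSpace.single z (1:ℝ))) : ℝ) :=
        key.symm
    _ ≤ ‖EuclideanSpace.single x (1:ℝ)‖ * ‖T (EuclideanSpace.single z (1:ℝ))‖ :=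
        real_inner_le_norm _ _
    _ ≤ ‖EuclideanSpace.single x (1:ℝ)‖ * (‖T‖ * ‖EuclideanSpace.single z (1:ℝ)‖) :=
        mul_le_mul_of_nonneg_left (T.le_opNorm _) (norm_nonneg _)
    _ = ‖T‖ := by rw [hx, hz]; ring

private def gedCnt (i : ℕ) (x z : V) : ℕ :=
  (Finset.univ.filter fun p : Fin (i + 1) → V =>
    G.IsWalkFun i p ∧ p 0 = x ∧ p (Fin.last i) = z).card

private lemma gedCnt_zero (x z : V) : gedCnt G 0 x z = if x = z then 1 else 0 := by
  unfold gedCnt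
  split_ifs with hxz
  · subst hxz
    rw [Finset.card_eq_one]
    refine ⟨fun _ => x, ?_⟩
    ext p
    simp only [Finset.mem_filter, Finset.mem_univ, true_and, Finset.mem_singleton]
    constructor
    · rintro ⟨-, h0, -⟩
      funext k
      have : k = 0 := Fin.fin_one_eq_zero k
      rw [this, h0]
    · rintro rfl
      exact ⟨fun j => j.elim0, rfl, rfl⟩
  · rw [Finset.card_eq_zero]
    ext p
    simp only [Finset.mem_filter, Finset.mem_univ, true_and, Finset.notMem_empty, iff_false]
    rintro ⟨-, h0, hl⟩
    exact hxz (by rw [← h0, ← hl]; rfl)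

private lemma gedCnt_succ (i : ℕ) (x z : V) :
    gedCnt G (i + 1) x z = ∑ y : V, if G.Adj x y then gedCnt G i y z else 0 := by
  have step1 : gedCnt G (i + 1) x z =
      (Finset.univ.filter fun q : Fin (i + 1) → V =>
        G.IsWalkFun i q ∧ G.Adj x (q 0) ∧ q (Fin.last i) = z).card := by
    unfold gedCnt
    apply Finset.card_nbij' (fun p => p ∘ Fin.succ) (fun q => Fin.cases x q)
    · intro p hp
      simp only [Finset.mem_coe, Finset.mem_filter, Finset.mem_univ, true_and] at hp ⊢
      obtain ⟨hw, h0, hl⟩ := hp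
      refine ⟨fun j => ?_, ?_, ?_⟩
      · have := hw j.succ
        rwa [← Fin.succ_castSucc] at this
      · have := hw 0
        rwa [Fin.castSucc_zero, h0] at this
      · rw [Function.comp_apply, Fin.succ_last] at *
        exact hl
    · intro q hq
      simp only [Finset.mem_coe, Finset.mem_filter, Finset.mem_univ, true_and] at hq ⊢
      obtain ⟨hw, ha, hl⟩ := hq
      refine ⟨fun j => ?_, ?_, ?_⟩
      · induction j using Fin.cases with
        | zero => exact ha
        | succ k =>
          have h1 : (Fin.succ k).castSucc = (k.castSucc).succ := (Fin.succ_castSucc k).symm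
          simpa only [h1, Fin.cases_succ] using hw k
      · simp
      · simpa only [← Fin.succ_last, Fin.cases_succ] using hl
    · intro p _
      funext k
      induction k using Fin.cases with
      | zero => simp_all [Finset.mem_filter]
      | succ k => simp
    · intro q _
      funext k
      simp
  rw [step1, Finset.card_eq_sum_card_fiberwise
    (f := fun q : Fin (i + 1) → V => q 0) (t := Finset.univ) (fun q _ => Finset.mem_univ _)]
  apply Finset.sum_congr rfl
  intro y _
  rw [Finset.filter_filter]
  split_ifs with hadj
  · unfold gedCnt
    congr 1
    ext q
    simp only [Finset.mem_filter, Finset.mem_univ, true_and]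
    constructor
    · rintro ⟨⟨hw, -, hl⟩, h0⟩; exact ⟨hw, h0, hl⟩
    · rintro ⟨hw, h0, hl⟩; exact ⟨⟨hw, h0 ▸ hadj, hl⟩, h0⟩
  · rw [Finset.card_eq_zero]
    ext q
    simp only [Finset.mem_filter, Finset.mem_univ, true_and, Finset.notMem_empty, iff_false]
    rintro ⟨⟨-, ha, -⟩, h0⟩
    exact hadj (h0 ▸ ha)

private lemma gedCnt_cast (i : ℕ) (x z : V) :
    (gedCnt G i x z : ℝ) = (G.adjMatrix ℝ ^ i) x z := by
  induction i generalizing x with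
  | zero => rw [gedCnt_zero, pow_zero, Matrix.one_apply]; split_ifs <;> simp
  | succ i ih =>
    rw [gedCnt_succ, pow_succ', Matrix.mul_apply, Nat.cast_sum]
    apply Finset.sum_congr rfl
    intro y _
    rw [SimpleGraph.adjMatrix_apply]
    split_ifs with hadj <;> simp [ih]

private lemma ged_walkCount_eq (i : ℕ) :
    G.walkCount i = ∑ x : V, ∑ z : V, gedCnt G i x z := by
  unfold SimpleGraph.walkCount
  rw [Finset.card_eq_sum_card_fiberwise
    (f := fun p : Fin (i + 1) → V => (p 0, p (Fin.last i))) (t := Finset.univ)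
    (fun p _ => Finset.mem_univ _), Fintype.sum_prod_type]
  apply Finset.sum_congr rfl; intro x _
  apply Finset.sum_congr rfl; intro z _
  unfold gedCnt
  rw [Finset.filter_filter]
  congr 1
  ext p
  simp [Prod.ext_iff, and_assoc]

private lemma ged_phiCount_le (i : ℕ) (S : Finset V) : G.phiCount i S ≤ G.walkCount i := by
  apply Finset.card_le_card
  intro p hp
  simp only [Finset.mem_filter, Finset.mem_univ, true_and] at hp ⊢
  exact hp.1

private lemma ged_pow_entry_le (k : ℕ) (hk : 1 ≤ k) (x z : V) :
    (G.adjMatrix ℝ ^ k) x z ≤ G.sigmaMax ^ k := by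
  calc (G.adjMatrix ℝ ^ k) x z
      ≤ ‖Matrix.toEuclideanCLM (𝕜 := ℝ) (G.adjMatrix ℝ ^ k)‖ := ged_entry_le_norm _ _ _
    _ = ‖(Matrix.toEuclideanCLM (𝕜 := ℝ) (G.adjMatrix ℝ)) ^ k‖ := by rw [map_pow]
    _ ≤ ‖Matrix.toEuclideanCLM (𝕜 := ℝ) (G.adjMatrix ℝ)‖ ^ k := norm_pow_le' _ hk
    _ = G.sigmaMax ^ k := rfl

private lemma ged_phi_le (k : ℕ) (hk : 1 ≤ k) (S : Finset V) :
    (G.phiCount k S : ℝ) ≤ (Fintype.card V : ℝ) ^ 2 * G.sigmaMax ^ k := by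
  calc (G.phiCount k S : ℝ)
      ≤ (G.walkCount k : ℝ) := Nat.cast_le.mpr (ged_phiCount_le G k S)
    _ = ∑ x : V, ∑ z : V, (gedCnt G k x z : ℝ) := by rw [ged_walkCount_eq]; push_cast; rfl
    _ = ∑ x : V, ∑ z : V, (G.adjMatrix ℝ ^ k) x z := by
        exact Finset.sum_congr rfl fun x _ =>
          Finset.sum_congr rfl fun z _ => gedCnt_cast G k x z
    _ ≤ ∑ _x : V, ∑ _z : V, G.sigmaMax ^ k := by
        refine Finset.sum_le_sum fun x _ => Finset.sum_le_sum fun z _ => ?_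
        exact ged_pow_entry_le G k hk x z
    _ = (Fintype.card V : ℝ) ^ 2 * G.sigmaMax ^ k := by
        simp [Finset.sum_const, Finset.card_univ]; ring

end GedAux

/-- `GED_{>ℓ}(S) ≤ |V|² (α σ_max)^{ℓ+1} / (1 − α σ_max)`. -/
theorem ged_tail_le {V : Type*} [Fintype V] [DecidableEq V] [Nonempty V]
    (G : SimpleGraph V) [DecidableRel G.Adj] (α : ℝ) (hα : 0 < α)
    (h : α * G.sigmaMax < 1) (S : Finset V) (ℓ : ℕ) (hℓ : 1 ≤ ℓ) :
    G.GEDtail α ℓ S ≤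
      (Fintype.card V : ℝ) ^ 2 * (α * G.sigmaMax) ^ (ℓ + 1) / (1 - α * G.sigmaMax) := by
  classical
  have hσ0 : 0 ≤ G.sigmaMax := norm_nonneg _
  set r : ℝ := α * G.sigmaMax with hrdef
  have hr0 : 0 ≤ r := mul_nonneg hα.le hσ0
  set n : ℝ := (Fintype.card V : ℝ) with hndef
  have hpt : ∀ i : ℕ, α ^ (ℓ + 1 + i) * (G.phiCount (ℓ + 1 + i) S : ℝ)
      ≤ (n ^ 2 * r ^ (ℓ + 1)) * r ^ i := by
    intro i
    have hk : 1 ≤ ℓ + 1 + i := by omega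
    have h1 : (G.phiCount (ℓ + 1 + i) S : ℝ) ≤ n ^ 2 * G.sigmaMax ^ (ℓ + 1 + i) :=
      ged_phi_le G _ hk S
    have h2 : α ^ (ℓ + 1 + i) * (G.phiCount (ℓ + 1 + i) S : ℝ)
        ≤ α ^ (ℓ + 1 + i) * (n ^ 2 * G.sigmaMax ^ (ℓ + 1 + i)) :=
      mul_le_mul_of_nonneg_left h1 (by positivity)
    calc α ^ (ℓ + 1 + i) * (G.phiCount (ℓ + 1 + i) S : ℝ)
        ≤ α ^ (ℓ + 1 + i) * (n ^ 2 * G.sigmaMax ^ (ℓ + 1 + i)) := h2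
      _ = (n ^ 2 * r ^ (ℓ + 1)) * r ^ i := by
          rw [hrdef, mul_pow, mul_pow, pow_add, pow_add]; ring
  have hgs : Summable (fun i : ℕ => (n ^ 2 * r ^ (ℓ + 1)) * r ^ i) :=
    (summable_geometric_of_lt_one hr0 h).mul_left _
  have hnn : ∀ i : ℕ, 0 ≤ α ^ (ℓ + 1 + i) * (G.phiCount (ℓ + 1 + i) S : ℝ) := by
    intro i; positivity
  have hls : Summable (fun i : ℕ => α ^ (ℓ + 1 + i) * (G.phiCount (ℓ + 1 + i) S : ℝ)) :=
    Summable.of_nonneg_of_le hnn hpt hgs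
  have hle : G.GEDtail α ℓ S ≤ ∑' i : ℕ, (n ^ 2 * r ^ (ℓ + 1)) * r ^ i :=
    Summable.tsum_le_tsum hpt hls hgs
  have hval : ∑' i : ℕ, (n ^ 2 * r ^ (ℓ + 1)) * r ^ i
      = n ^ 2 * r ^ (ℓ + 1) / (1 - r) := by
    rw [tsum_mul_left, tsum_geometric_of_lt_one hr0 h, div_eq_mul_inv]
  calc G.GEDtail α ℓ S ≤ ∑' i : ℕ, (n ^ 2 * r ^ (ℓ + 1)) * r ^ i := hle
    _ = n ^ 2 * r ^ (ℓ + 1) / (1 - r) := hval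
end

section
/- For every i ≥ 1, every S ⊆ V, and every x ∈ V, the marginal walk count satisfies φ_i(S ∪ {x}) − φ_i(S) ≤ Σ_{j=0}^{i} m_{i−j}(x, S) · s_j(x, S), where m_t(x, S) is the number of walks of length t ending at x that contain no vertex of S, and s_j(x, S) is the number of walks of length j starting at x that contain no vertex of S. -/
open scoped BigOperators

private lemma firstHit_class_card_le {V : Type*} [Fintype V] [DecidableEq V]
    (G : SimpleGraph V) [DecidableRel G.Adj] (i : ℕ) (S : Finset V) (x : V)
    (k : ℕ) (hk : k ≤ i) :
    (Finset.univ.filter (fun p : Fin (i + 1) → V =>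
      (G.IsWalkFun i p ∧ (∃ j, p j = x) ∧ ∀ j, p j ∉ S) ∧
        ∀ m : Fin (i + 1), (m.val = k → p m = x) ∧ (m.val < k → p m ≠ x))).card ≤
      G.missCount k x S * G.startMissCount (i - k) x S := by
  classical
  rw [SimpleGraph.missCount, SimpleGraph.startMissCount, ← Finset.card_product]
  apply Finset.card_le_card_of_injOn
    (fun p => (fun a : Fin (k + 1) => p ⟨a.val, by omega⟩,
               fun a : Fin (i - k + 1) => p ⟨k + a.val, by omega⟩))
  · intro p hp
    simp only [Finset.mem_coe, Finset.mem_filter, Finset.mem_univ, true_and] at hp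
    obtain ⟨⟨hw, _, hS⟩, hfirst⟩ := hp
    simp only [Finset.mem_coe, Finset.mem_product, Finset.mem_filter, Finset.mem_univ, true_and]
    refine ⟨⟨?_, ?_, fun j => hS _⟩, ?_, ?_, fun l => hS _⟩
    · intro j
      exact hw ⟨j.val, lt_of_lt_of_le j.isLt hk⟩
    · exact (hfirst ⟨k, by omega⟩).1 rfl
    · intro j
      have hj : k + j.val < i := by omega
      exact hw ⟨k + j.val, hj⟩
    · exact (hfirst ⟨k + (0 : Fin (i - k + 1)).val, by omega⟩).1 rfl
  · intro p hp q hq h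
    simp only [Prod.mk.injEq] at h
    funext m
    by_cases hm : m.val ≤ k
    · have := congrFun h.1 ⟨m.val, by omega⟩
      have e1 : (⟨m.val, m.isLt⟩ : Fin (i + 1)) = m := rfl
      simpa using this
    · have := congrFun h.2 ⟨m.val - k, by omega⟩
      have e1 : (⟨k + (m.val - k), by omega⟩ : Fin (i + 1)) = m :=
        Fin.ext (show k + (m.val - k) = m.val by omega)
      simpa [e1] using this

/-- `φ_i(S ∪ {x}) − φ_i(S) ≤ Σ_{j=0}^i m_{i−j}(x,S) · s_j(x,S)`. -/
theorem phi_marginal_le_sum_miss_mul_start {V : Type*} [Fintype V] [DecidableEq V]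
    (G : SimpleGraph V) [DecidableRel G.Adj] (i : ℕ) (hi : 1 ≤ i)
    (S : Finset V) (x : V) :
    (G.phiCount i (insert x S) : ℤ) - (G.phiCount i S : ℤ) ≤
      ∑ j ∈ Finset.range (i + 1),
        ((G.missCount (i - j) x S : ℤ) * (G.startMissCount j x S : ℤ)) := by
  classical
  set T : Finset (Fin (i + 1) → V) :=
    Finset.univ.filter (fun p => G.IsWalkFun i p ∧ (∃ j, p j = x) ∧ ∀ j, p j ∉ S) with hT
  have hsplit : G.phiCount i (insert x S) = G.phiCount i S + T.card := by
    rw [SimpleGraph.phiCount, SimpleGraph.phiCount, hT,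
      ← Finset.card_union_of_disjoint (by
        rw [Finset.disjoint_left]
        rintro p hp hp'
        simp only [Finset.mem_filter, Finset.mem_univ, true_and] at hp hp'
        obtain ⟨_, j, hj⟩ := hp
        exact hp'.2.2 j hj)]
    congr 1
    ext p
    simp only [Finset.mem_union, Finset.mem_filter, Finset.mem_univ, true_and,
      Finset.mem_insert]
    constructor
    · rintro ⟨hw, j, hj | hj⟩
      · by_cases hS : ∃ l, p l ∈ S
        · exact Or.inl ⟨hw, hS⟩
        · exact Or.inr ⟨hw, ⟨j, hj⟩, fun l hl => hS ⟨l, hl⟩⟩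
      · exact Or.inl ⟨hw, j, hj⟩
    · rintro (⟨hw, j, hj⟩ | ⟨hw, ⟨j, hj⟩, hS⟩)
      · exact ⟨hw, j, Or.inr hj⟩
      · exact ⟨hw, j, Or.inl hj⟩
  have hcover : T ⊆ (Finset.range (i + 1)).biUnion (fun k =>
      Finset.univ.filter (fun p : Fin (i + 1) → V =>
        (G.IsWalkFun i p ∧ (∃ j, p j = x) ∧ ∀ j, p j ∉ S) ∧
          ∀ m : Fin (i + 1), (m.val = k → p m = x) ∧ (m.val < k → p m ≠ x))) := by
    intro p hp
    have hp' := hp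
    rw [hT, Finset.mem_filter] at hp'
    obtain ⟨-, hw, ⟨j, hj⟩, hS⟩ := hp'
    have hex : ∃ n, ∃ m : Fin (i + 1), m.val = n ∧ p m = x := ⟨j.val, j, rfl, hj⟩
    obtain ⟨m0, hm0, hpm0⟩ := Nat.find_spec hex
    rw [Finset.mem_biUnion]
    refine ⟨Nat.find hex, Finset.mem_range.mpr (by omega), ?_⟩
    simp only [Finset.mem_filter, Finset.mem_univ, true_and]
    refine ⟨⟨hw, ⟨j, hj⟩, hS⟩, fun m => ⟨fun hmk => ?_, fun hmk hpm => ?_⟩⟩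
    · have : m = m0 := Fin.ext (by omega)
      rw [this]; exact hpm0
    · exact Nat.find_min hex hmk ⟨m, rfl, hpm⟩
  have hbound : T.card ≤ ∑ k ∈ Finset.range (i + 1),
      G.missCount k x S * G.startMissCount (i - k) x S := by
    calc T.card ≤ _ := Finset.card_le_card hcover
      _ ≤ _ := Finset.card_biUnion_le
      _ ≤ _ := Finset.sum_le_sum (fun k hk =>
          firstHit_class_card_le G i S x k (by
            simp only [Finset.mem_range] at hk; omega))
  have hre : ∑ k ∈ Finset.range (i + 1), G.missCount k x S * G.startMissCount (i - k) x S
      = ∑ j ∈ Finset.range (i + 1), G.missCount (i - j) x S * G.startMissCount j x S := by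
    rw [← Finset.sum_range_reflect (fun j => G.missCount (i - j) x S * G.startMissCount j x S)]
    refine Finset.sum_congr rfl (fun k hk => ?_)
    simp only [Finset.mem_range] at hk
    congr 2 <;> omega
  have hfinal : T.card ≤ ∑ j ∈ Finset.range (i + 1),
      G.missCount (i - j) x S * G.startMissCount j x S := hre ▸ hbound
  calc (G.phiCount i (insert x S) : ℤ) - (G.phiCount i S : ℤ) = T.card := by
        rw [hsplit]; push_cast; ring
    _ ≤ _ := by exact_mod_cast hfinal
end

section
/- Greedy with additive error for submodular maximization: let X be a nonempty finite set, f a real-valued, non-decreasing, submodular set function on subsets of X with f(∅) = 0, k ≥ 1 an integer, and ε > 0. Suppose S_0 = ∅ and for each i = 1, …, k, S_i = S_{i−1} ∪ {x_i} where x_i ∈ X satisfies f(S_{i−1} ∪ {x_i}) − f(S_{i−1}) ≥ f(S_{i−1} ∪ {y}) − f(S_{i−1}) − ε/k for every y ∈ X. Then f(S_k) ≥ (1 − 1/e) · f(S*) − ε, where S* is any subset of X with |S*| ≤ k maximizing f among all such subsets. -/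
open scoped BigOperators

private lemma subadd_aux {X : Type*} [DecidableEq X] (f : Finset X → ℝ)
    (hmono : ∀ S T : Finset X, S ⊆ T → f S ≤ f T)
    (hsub : ∀ S T : Finset X, S ⊆ T → ∀ x ∉ T,
      f (insert x S) - f S ≥ f (insert x T) - f T)
    (B : Finset X) : ∀ D : Finset X,
    f (B ∪ D) ≤ f B + ∑ y ∈ D, (f (insert y B) - f B) := by
  intro D
  induction D using Finset.induction_on with
  | empty => simp
  | @insert a D haD ih =>
    rw [Finset.sum_insert haD, Finset.union_insert]
    by_cases ha : a ∈ B ∪ D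
    · rw [Finset.insert_eq_self.mpr ha]
      have h0 : 0 ≤ f (insert a B) - f B :=
        sub_nonneg.mpr (hmono _ _ (Finset.subset_insert _ _))
      linarith
    · have := hsub B (B ∪ D) Finset.subset_union_left a ha
      linarith

/-- greedy with additive error for non-decreasing submodular maximization
achieves a `(1 − 1/e)`-approximation up to additive error `ε`. -/
theorem greedy_additive_error {X : Type*} [Fintype X] [DecidableEq X] [Nonempty X]
    (f : Finset X → ℝ) (hf0 : f ∅ = 0)
    (hmono : ∀ S T : Finset X, S ⊆ T → f S ≤ f T)
    (hsub : ∀ S T : Finset X, S ⊆ T → ∀ x ∉ T,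
      f (insert x S) - f S ≥ f (insert x T) - f T)
    (k : ℕ) (hk : 1 ≤ k) (ε : ℝ) (hε : 0 < ε)
    (S : ℕ → Finset X) (x : ℕ → X) (hS0 : S 0 = ∅)
    (hstep : ∀ i : ℕ, 1 ≤ i → i ≤ k →
      S i = insert (x i) (S (i - 1)) ∧
        ∀ y : X, f (insert (x i) (S (i - 1))) - f (S (i - 1)) ≥
          f (insert y (S (i - 1))) - f (S (i - 1)) - ε / k)
    (Sstar : Finset X) (hcard : Sstar.card ≤ k)
    (hopt : ∀ T : Finset X, T.card ≤ k → f T ≤ f Sstar) :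
    f (S k) ≥ (1 - 1 / Real.exp 1) * f Sstar - ε := by
  set K : ℝ := (k : ℝ) with hK
  have hK1 : (1:ℝ) ≤ K := by rw [hK]; exact_mod_cast hk
  have hK0 : (0:ℝ) < K := lt_of_lt_of_le one_pos hK1
  have hfstar : 0 ≤ f Sstar := by
    have := hmono ∅ Sstar (Finset.empty_subset _)
    linarith [hf0 ▸ this]
  -- one-step inequality
  have step : ∀ i : ℕ, i < k →
      f Sstar - f (S (i+1)) ≤ (1 - 1/K) * (f Sstar - f (S i)) + ε / K := by
    intro i hik
    obtain ⟨heq, hgreedy⟩ := hstep (i+1) (Nat.le_add_left 1 i) hik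
    simp only [Nat.add_sub_cancel] at heq hgreedy
    set Δ : ℝ := f (S (i+1)) - f (S i) with hΔ
    have hΔeq : f (insert (x (i+1)) (S i)) - f (S i) = Δ := by rw [hΔ, heq]
    obtain ⟨y0⟩ := ‹Nonempty X›
    have hΔnn : -(ε/K) ≤ Δ := by
      have h1 := hgreedy y0
      have h2 : 0 ≤ f (insert y0 (S i)) - f (S i) :=
        sub_nonneg.mpr (hmono _ _ (Finset.subset_insert _ _))
      rw [hΔeq] at h1
      linarith
    have hsum : ∑ y ∈ Sstar, (f (insert y (S i)) - f (S i)) ≤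
        (Sstar.card : ℝ) * (Δ + ε / K) := by
      calc ∑ y ∈ Sstar, (f (insert y (S i)) - f (S i))
          ≤ ∑ _y ∈ Sstar, (Δ + ε / K) := by
            apply Finset.sum_le_sum
            intro y _
            have := hgreedy y
            rw [hΔeq] at this
            linarith
        _ = (Sstar.card : ℝ) * (Δ + ε / K) := by
            rw [Finset.sum_const, nsmul_eq_mul]
    have hcard' : (Sstar.card : ℝ) * (Δ + ε / K) ≤ K * (Δ + ε / K) := by
      apply mul_le_mul_of_nonneg_right _ (by linarith)
      rw [hK]; exact_mod_cast hcard
    have hmain : f Sstar ≤ f (S i) + K * (Δ + ε / K) := by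
      have h1 : f Sstar ≤ f (S i ∪ Sstar) :=
        hmono _ _ Finset.subset_union_right
      have h2 := subadd_aux f hmono hsub (S i) Sstar
      linarith
    have hKe : K * (ε / K) = ε := by field_simp
    have hgoal : K * (f Sstar - f (S (i+1))) ≤
        K * ((1 - 1/K) * (f Sstar - f (S i)) + ε / K) := by
      have hexp : K * ((1 - 1/K) * (f Sstar - f (S i)) + ε / K) =
          (K - 1) * (f Sstar - f (S i)) + ε := by
        field_simp
      rw [hexp]
      have : K * Δ + ε ≤ K * Δ + ε := le_refl _
      nlinarith [hmain, hKe]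
    exact le_of_mul_le_mul_left hgoal hK0
  -- iterate
  have iter : ∀ i : ℕ, i ≤ k →
      f Sstar - f (S i) ≤ (1 - 1/K)^i * f Sstar + i * (ε / K) := by
    intro i
    induction i with
    | zero => intro _; simp [hS0, hf0]
    | succ n ih =>
      intro hnk
      have hn : n ≤ k := Nat.le_of_succ_le hnk
      have hnk' : n < k := hnk
      have h1 := step n hnk'
      have h2 := ih hn
      have hq0 : 0 ≤ 1 - 1/K := by
        have : 1/K ≤ 1 := by
          rw [div_le_one hK0]; exact hK1
        linarith
      have hq1 : 1 - 1/K ≤ 1 := by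
        have : 0 < 1/K := by positivity
        linarith
      have h3 : (1 - 1/K) * (f Sstar - f (S n)) ≤
          (1 - 1/K) * ((1 - 1/K)^n * f Sstar + n * (ε / K)) :=
        mul_le_mul_of_nonneg_left h2 hq0
      have h4 : (1 - 1/K) * (n * (ε / K)) ≤ n * (ε / K) := by
        have hnn : 0 ≤ (n:ℝ) * (ε / K) := by positivity
        nlinarith
      have h5 : (1 - 1/K) * ((1 - 1/K)^n * f Sstar) = (1 - 1/K)^(n+1) * f Sstar := by
        ring
      push_cast
      nlinarith [h1, h3, h4]
  have hfinal := iter k (le_refl k)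
  have hεterm : (k:ℝ) * (ε / K) = ε := by
    rw [hK]; field_simp
  have hpow : (1 - 1/K)^k ≤ 1 / Real.exp 1 := by
    have hq0 : 0 ≤ 1 - 1/K := by
      have : 1/K ≤ 1 := by rw [div_le_one hK0]; exact hK1
      linarith
    have h1 : 1 - 1/K ≤ Real.exp (-(1/K)) := by
      have := Real.add_one_le_exp (-(1/K))
      linarith
    have h2 : (1 - 1/K)^k ≤ (Real.exp (-(1/K)))^k :=
      pow_le_pow_left₀ hq0 h1 k
    have h3 : (Real.exp (-(1/K)))^k = Real.exp (-1) := by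
      rw [← Real.exp_nat_mul]
      congr 1
      rw [hK]
      field_simp
    rw [h3, Real.exp_neg] at h2
    simpa [one_div] using h2
  have hpowmul : (1 - 1/K)^k * f Sstar ≤ (1 / Real.exp 1) * f Sstar :=
    mul_le_mul_of_nonneg_right hpow hfstar
  have : f Sstar - f (S k) ≤ (1 / Real.exp 1) * f Sstar + ε := by
    calc f Sstar - f (S k) ≤ (1 - 1/K)^k * f Sstar + k * (ε / K) := hfinal
      _ ≤ (1 / Real.exp 1) * f Sstar + ε := by rw [hεterm]; linarith
  linarith [this]
end

section
/- Intermediate bound for greedy with additive error: let X be a nonempty finite set, f a real-valued, non-decreasing, submodular set function on subsets of X with f(∅) = 0, k ≥ 1 an integer, and ε > 0. Suppose S_0 = ∅ and for each i, S_i = S_{i−1} ∪ {x_i} where x_i ∈ X satisfies f(S_{i−1} ∪ {x_i}) − f(S_{i−1}) ≥ f(S_{i−1} ∪ {y}) − f(S_{i−1}) − ε/k for every y ∈ X. Then for every j with 0 ≤ j ≤ k, f(S_j) ≥ ((k^j − (k−1)^j)/k^j) · f(S*) − j·ε/k, where S* is any subset of X with |S*| ≤ k maximizing f among all such subsets. 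-/
open scoped BigOperators

lemma submod_union_bound {X : Type*} [Fintype X] [DecidableEq X]
    (f : Finset X → ℝ)
    (hmono : ∀ S T : Finset X, S ⊆ T → f S ≤ f T)
    (hsub : ∀ S T : Finset X, S ⊆ T → ∀ x ∉ T,
      f (insert x S) - f S ≥ f (insert x T) - f T)
    (A : Finset X) : ∀ B : Finset X,
    f (A ∪ B) ≤ f A + ∑ y ∈ B, (f (insert y A) - f A) := by
  intro B
  induction B using Finset.induction_on with
  | empty => simp
  | @insert b B hb ih =>
    rw [Finset.union_insert, Finset.sum_insert hb]
    by_cases hbm : b ∈ A ∪ B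
    · rw [Finset.insert_eq_self.mpr hbm]
      have h1 : f A ≤ f (insert b A) := hmono _ _ (Finset.subset_insert _ _)
      linarith
    · have h2 := hsub A (A ∪ B) Finset.subset_union_left b hbm
      linarith

/-- intermediate bound for greedy with additive error:
`f(S_j) ≥ ((k^j − (k−1)^j)/k^j) · f(S*) − j·ε/k` for every `0 ≤ j ≤ k`. -/
theorem greedy_additive_error_intermediate {X : Type*} [Fintype X] [DecidableEq X] [Nonempty X]
    (f : Finset X → ℝ) (hf0 : f ∅ = 0)
    (hmono : ∀ S T : Finset X, S ⊆ T → f S ≤ f T)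
    (hsub : ∀ S T : Finset X, S ⊆ T → ∀ x ∉ T,
      f (insert x S) - f S ≥ f (insert x T) - f T)
    (k : ℕ) (hk : 1 ≤ k) (ε : ℝ) (hε : 0 < ε)
    (S : ℕ → Finset X) (x : ℕ → X) (hS0 : S 0 = ∅)
    (hstep : ∀ i : ℕ, 1 ≤ i → i ≤ k →
      S i = insert (x i) (S (i - 1)) ∧
        ∀ y : X, f (insert (x i) (S (i - 1))) - f (S (i - 1)) ≥
          f (insert y (S (i - 1))) - f (S (i - 1)) - ε / k)
    (Sstar : Finset X) (hcard : Sstar.card ≤ k)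
    (hopt : ∀ T : Finset X, T.card ≤ k → f T ≤ f Sstar) :
    ∀ j : ℕ, j ≤ k →
      f (S j) ≥ (((k : ℝ) ^ j - ((k : ℝ) - 1) ^ j) / (k : ℝ) ^ j) * f Sstar - j * ε / k := by
  have hK : (1 : ℝ) ≤ (k : ℝ) := by exact_mod_cast hk
  have hKpos : (0 : ℝ) < (k : ℝ) := by linarith
  have hF : 0 ≤ f Sstar := by
    have := hopt ∅ (by simp)
    linarith [hf0 ▸ this]
  intro j
  induction j with
  | zero => intro _; simp [hS0, hf0]
  | succ j ih =>
    intro hj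
    have hjk : j ≤ k := by omega
    have IH := ih (by omega)
    obtain ⟨hSeq, hgreedy⟩ := hstep (j + 1) (by omega) hj
    simp only [Nat.add_sub_cancel] at hSeq hgreedy
    -- key: f Sstar ≤ f (S j) + k * (f (S (j+1)) - f (S j) + ε/k)
    set F := f Sstar with hFdef
    set a : ℝ := (k : ℝ) ^ j with ha
    set b : ℝ := ((k : ℝ) - 1) ^ j with hb
    have hapos : 0 < a := pow_pos hKpos j
    have hbnn : 0 ≤ b := pow_nonneg (by linarith) j
    have hba : b ≤ a := pow_le_pow_left₀ (by linarith) (by linarith) j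
    have hgain : ∀ y : X, f (insert y (S j)) - f (S j) ≤ f (S (j+1)) - f (S j) + ε / k := by
      intro y
      have := hgreedy y
      rw [hSeq]
      linarith
    have hkey : F ≤ f (S j) + (k : ℝ) * (f (S (j+1)) - f (S j) + ε / k) := by
      have h1 : F ≤ f (S j ∪ Sstar) := hmono _ _ Finset.subset_union_right
      have h2 := submod_union_bound f hmono hsub (S j) Sstar
      have h3 : ∑ y ∈ Sstar, (f (insert y (S j)) - f (S j)) ≤
          ∑ y ∈ Sstar, (f (S (j+1)) - f (S j) + ε / k) :=
        Finset.sum_le_sum (fun y _ => hgain y)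
      have h4 : ∑ y ∈ Sstar, (f (S (j+1)) - f (S j) + ε / k) =
          (Sstar.card : ℝ) * (f (S (j+1)) - f (S j) + ε / k) := by
        rw [Finset.sum_const, nsmul_eq_mul]
      have hCnn : 0 ≤ f (S (j+1)) - f (S j) + ε / k := by
        have := hgain (x (j+1))
        have hmono' : f (S j) ≤ f (insert (x (j+1)) (S j)) := hmono _ _ (Finset.subset_insert _ _)
        have heps : 0 < ε / k := div_pos hε hKpos
        rw [hSeq]
        linarith
      have h5 : (Sstar.card : ℝ) * (f (S (j+1)) - f (S j) + ε / k) ≤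
          (k : ℝ) * (f (S (j+1)) - f (S j) + ε / k) := by
        apply mul_le_mul_of_nonneg_right _ hCnn
        exact_mod_cast hcard
      linarith
    -- linear recurrence
    have hKe : (k : ℝ) * (ε / k) = ε := by field_simp
    have h1 : (k : ℝ) * f (S (j+1)) ≥ ((k : ℝ) - 1) * f (S j) + F - ε := by
      have := hkey
      nlinarith [hkey]
    -- IH multiplied out
    have IH' : a * f (S j) ≥ (a - b) * F - (j : ℝ) * ε * a / k := by
      have := mul_le_mul_of_nonneg_left IH (le_of_lt hapos)
      have heq : a * ((a - b) / a * F - (j : ℝ) * ε / k) = (a - b) * F - (j : ℝ) * ε * a / k := by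
        field_simp
      linarith [heq ▸ this]
    -- goal
    have hpow : (k : ℝ) ^ (j + 1) = (k : ℝ) * a := by rw [ha]; ring
    have hpow2 : ((k : ℝ) - 1) ^ (j + 1) = ((k : ℝ) - 1) * b := by rw [hb]; ring
    have hmul : ((k : ℝ) - 1) * (a * f (S j)) ≥ ((k : ℝ) - 1) * ((a - b) * F - (j : ℝ) * ε * a / k) :=
      mul_le_mul_of_nonneg_left IH' (by linarith)
    have hdiv : ((k : ℝ) - 1) * ((j : ℝ) * ε * a / k) ≤ (j : ℝ) * ε * a := by
      rw [mul_div_assoc']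
      rw [div_le_iff₀ hKpos]
      nlinarith [mul_nonneg (mul_nonneg (Nat.cast_nonneg j : (0:ℝ) ≤ j) hε.le) hapos.le]
    have hfin : ((k : ℝ) * a - ((k : ℝ) - 1) * b) * F ≤
        (k : ℝ) * a * f (S (j+1)) + ((j : ℝ) + 1) * ε * a := by
      nlinarith [mul_le_mul_of_nonneg_left h1 hapos.le, hmul, hdiv]
    rw [ge_iff_le, sub_le_iff_le_add, div_mul_eq_mul_div,
      div_le_iff₀ (pow_pos hKpos (j+1)), hpow, hpow2]
    push_cast
    have hrw : (f (S (j + 1)) + ((j : ℝ) + 1) * ε / (k : ℝ)) * ((k : ℝ) * a) =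
        (k : ℝ) * a * f (S (j + 1)) + ((j : ℝ) + 1) * ε * a := by
      field_simp
    linarith [hfin, hrw]
end
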